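/- Let g be a 2-step nilpotent Lie algebra whose center equals its commutator ideal and which admits an ad-invariant nondegenerate symmetric bilinear form. Then dim g = 2 · dim z(g). -/

import Mathlib

/-- A 2-step nilpotent Lie algebra whose center equals its commutator ideal and which
admits an ad-invariant nondegenerate symmetric bilinear form satisfies
dim g = 2 · dim z(g). -/
theorem finrank_eq_two_mul_finrank_center
    {K L : Type*} [Field K] [CharZero K] [LieRing L] [LieAlgebra K L]
    [FiniteDimensional K L]
    (h2 : LieModule.lowerCentralSeries K L L 2 = ⊥)
    (hne : LieModule.lowerCentralSeries K L L 1 ≠ ⊥)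
    (hzc : (LieAlgebra.center K L : LieSubmodule K L L) =
      (⁅(⊤ : LieIdeal K L), (⊤ : LieIdeal K L)⁆ : LieIdeal K L))
    (B : L →ₗ[K] L →ₗ[K] K)
    (hsymm : ∀ x y : L, B x y = B y x)
    (hnd : ∀ x : L, (∀ y : L, B x y = 0) → x = 0)
    (hinv : ∀ x y z : L, B ⁅x, y⁆ z + B y ⁅x, z⁆ = 0) :
    Module.finrank K L =
      2 * Module.finrank K ((LieAlgebra.center K L : LieSubmodule K L L) : Submodule K L) := by
  classical
  set B' : LinearMap.BilinForm K L := B with hB'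
  set C : Submodule K L :=
    LieSubmodule.toSubmodule (⁅(⊤ : LieIdeal K L), (⊤ : LieIdeal K L)⁆ : LieIdeal K L) with hC
  set Z : Submodule K L :=
    LieSubmodule.toSubmodule (LieAlgebra.center K L : LieSubmodule K L L) with hZ
  have hBnd : B'.Nondegenerate :=
    ⟨fun x hx => hnd x hx, fun y hy => hnd y fun x => (hsymm y x).trans (hy x)⟩
  have hBrefl : B'.IsRefl := fun x y h => by rw [hB', hsymm]; exact h
  have hmemC : ∀ x y : L, ⁅x, y⁆ ∈ C := by
    intro x y
    rw [hC, LieSubmodule.lieIdeal_oper_eq_linear_span']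
    exact Submodule.subset_span ⟨x, trivial, y, trivial, rfl⟩
  have horth : B'.orthogonal C = Z := by
    ext z
    rw [LinearMap.BilinForm.mem_orthogonal_iff]
    constructor
    · intro hz
      have hz' : ∀ x : L, ⁅x, z⁆ = 0 := by
        intro x
        apply hnd
        intro y
        have h1 := hinv x y z
        have h2 : B ⁅x, y⁆ z = 0 := hz _ (hmemC x y)
        rw [hsymm]
        linear_combination h1 - h2
      exact (LieSubmodule.mem_toSubmodule _).mpr
        ((LieModule.mem_maxTrivSubmodule K L L z).mpr hz')
    · intro hz n hn
      have hz' : ∀ x : L, ⁅x, z⁆ = 0 :=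
        (LieModule.mem_maxTrivSubmodule K L L z).mp ((LieSubmodule.mem_toSubmodule _).mp hz)
      have hsub : C ≤ LinearMap.ker (B.flip z) := by
        rw [hC, LieSubmodule.lieIdeal_oper_eq_linear_span', Submodule.span_le]
        rintro m ⟨x, -, y, -, rfl⟩
        have h1 := hinv x y z
        have h2 : B y ⁅x, z⁆ = 0 := by rw [hz' x]; simp
        simp only [SetLike.mem_coe, LinearMap.mem_ker, LinearMap.flip_apply]
        linear_combination h1 - h2
      exact hsub hn
  have hCc : Z = C := by rw [hZ, hC, hzc]
  have hfin := LinearMap.BilinForm.finrank_orthogonal hBnd C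
  rw [horth, hCc] at hfin
  have hle : Module.finrank K C ≤ Module.finrank K L := Submodule.finrank_le C
  show Module.finrank K L = 2 * Module.finrank K Z
  rw [hCc]
  omega
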